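/- With H and its nonbacktracking powers H^{(n)} as above, and Ũ_n(ξ) := U_n(ξ/2) the rescaled Chebyshev polynomial of the second kind, one has Ũ_n(H) = Σ_{k≥0} (M−1)^{-k} H^{(n−2k)} for all n ≥ 0, with the convention H^{(m)} = 0 for m < 0. -/

import Mathlib

open Classical in
/-- The `n`-th nonbacktracking power of a matrix. -/
noncomputable def nbPow {ι : Type*} [Fintype ι] [DecidableEq ι]
    (H : Matrix ι ι ℂ) (n : ℕ) : Matrix ι ι ℂ :=
  Matrix.of fun x y =>
    ∑ p : Fin (n + 1) → ι,
      if p 0 = x ∧ p (Fin.last n) = y ∧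
          (∀ i : ℕ, ∀ h : i + 2 ≤ n, p ⟨i, by omega⟩ ≠ p ⟨i + 2, by omega⟩)
      then ∏ i : Fin n, H (p i.castSucc) (p i.succ) else 0

/-- The rescaled Chebyshev polynomial of the second kind, `Ũ_n(ξ) = U_n(ξ/2)`. -/
noncomputable def tildeU (n : ℕ) : Polynomial ℂ :=
  (Polynomial.Chebyshev.U ℂ (n : ℤ)).comp (Polynomial.C 2⁻¹ * Polynomial.X)

section Aux
open Classical

set_option linter.unusedSectionVars false
variable {ι : Type*} [Fintype ι] [DecidableEq ι] (H : Matrix ι ι ℂ)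

/-- nonbacktracking condition -/
def nbc (n : ℕ) (p : Fin (n + 1) → ι) : Prop :=
  ∀ i : ℕ, ∀ h : i + 2 ≤ n, p ⟨i, by omega⟩ ≠ p ⟨i + 2, by omega⟩

/-- path weight -/
noncomputable def pw (n : ℕ) (p : Fin (n + 1) → ι) : ℂ :=
  ∏ i : Fin n, H (p i.castSucc) (p i.succ)

lemma nbPow_apply (n : ℕ) (x y : ι) :
    nbPow H n x y =
      ∑ p : Fin (n + 1) → ι,
        if p 0 = x ∧ p (Fin.last n) = y ∧ nbc n p then pw H n p else 0 := rfl

lemma cons_mk_succ {m : ℕ} (z : ι) (p : Fin (m + 1) → ι) (i : ℕ) (h : i + 1 < m + 2) :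
    (Fin.cons z p : Fin (m + 2) → ι) ⟨i + 1, h⟩ = p ⟨i, Nat.lt_of_succ_lt_succ h⟩ := by
  have e : (⟨i + 1, h⟩ : Fin (m + 2)) = Fin.succ ⟨i, Nat.lt_of_succ_lt_succ h⟩ := by
    ext; simp
  rw [e, Fin.cons_succ]

lemma cons_mk_zero {m : ℕ} (z : ι) (p : Fin (m + 1) → ι) (h : 0 < m + 2) :
    (Fin.cons z p : Fin (m + 2) → ι) ⟨0, h⟩ = z := by
  have e : (⟨0, h⟩ : Fin (m + 2)) = 0 := rfl
  rw [e, Fin.cons_zero]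

lemma cons_pw (n : ℕ) (z : ι) (p : Fin (n + 1) → ι) :
    pw H (n + 1) (Fin.cons z p) = H z (p 0) * pw H n p := by
  unfold pw
  rw [Fin.prod_univ_succ]
  refine congrArg₂ _ (by simp) ?_
  refine Finset.prod_congr rfl fun i _ => ?_
  rw [← Fin.succ_castSucc]
  simp

lemma cons_last (n : ℕ) (z : ι) (p : Fin (n + 1) → ι) :
    (Fin.cons z p : Fin (n + 2) → ι) (Fin.last (n + 1)) = p (Fin.last n) := by
  rw [← Fin.succ_last, Fin.cons_succ]

lemma cons_nbc (m : ℕ) (z : ι) (p : Fin (m + 2) → ι) :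
    nbc (m + 2) (Fin.cons z p) ↔ z ≠ p ⟨1, by omega⟩ ∧ nbc (m + 1) p := by
  constructor
  · intro h
    refine ⟨?_, ?_⟩
    · have := h 0 (by omega)
      rwa [cons_mk_zero, cons_mk_succ] at this
    · intro i hi
      have := h (i + 1) (by omega)
      rwa [cons_mk_succ, cons_mk_succ] at this
  · rintro ⟨h1, h2⟩ i hi
    match i, hi with
    | 0, hi =>
      rw [cons_mk_zero, cons_mk_succ]
      exact h1
    | (j + 1), hi =>
      rw [cons_mk_succ, cons_mk_succ]
      exact h2 j (by omega)

end Aux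

section More
open Classical
set_option linter.unusedSectionVars false
variable {ι : Type*} [Fintype ι] [DecidableEq ι] (H : Matrix ι ι ℂ)

lemma sum_cons (n : ℕ) (f : (Fin (n + 2) → ι) → ℂ) :
    ∑ q : Fin (n + 2) → ι, f q = ∑ z : ι, ∑ p : Fin (n + 1) → ι, f (Fin.cons z p) := by
  rw [← Equiv.sum_comp (Fin.consEquiv (fun _ : Fin (n + 2) => ι)) f, Fintype.sum_prod_type]
  rfl

lemma lemA (n : ℕ) (x y : ι) :
    nbPow H (n + 2) x y =
      ∑ p : Fin (n + 2) → ι,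
        if p (Fin.last (n + 1)) = y ∧ nbc (n + 1) p ∧ x ≠ p ⟨1, by omega⟩
        then H x (p 0) * pw H (n + 1) p else 0 := by
  rw [nbPow_apply, sum_cons]
  have step1 : ∀ z : ι, ∀ p : Fin (n + 2) → ι,
      (if (Fin.cons z p : Fin (n + 3) → ι) 0 = x ∧
            (Fin.cons z p : Fin (n + 3) → ι) (Fin.last (n + 2)) = y ∧
            nbc (n + 2) (Fin.cons z p)
       then pw H (n + 2) (Fin.cons z p) else 0)
      = (if z = x then
          (if p (Fin.last (n + 1)) = y ∧ nbc (n + 1) p ∧ x ≠ p ⟨1, by omega⟩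
           then H x (p 0) * pw H (n + 1) p else 0) else 0) := by
    intro z p
    rw [Fin.cons_zero, cons_last, cons_pw]
    by_cases hz : z = x
    · subst hz
      by_cases h1 : p (Fin.last (n + 1)) = y <;>
        by_cases h2 : nbc (n + 1) p <;>
        by_cases h3 : z ≠ p ⟨1, by omega⟩ <;>
        simp [h1, h2, h3, cons_nbc, mul_comm]
    · simp [hz]
  simp_rw [step1]
  have pull : ∀ z : ι,
      (∑ p : Fin (n + 2) → ι, if z = x then
        (if p (Fin.last (n + 1)) = y ∧ nbc (n + 1) p ∧ x ≠ p ⟨1, by omega⟩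
         then H x (p 0) * pw H (n + 1) p else 0) else 0)
      = if z = x then
          (∑ p : Fin (n + 2) → ι,
            if p (Fin.last (n + 1)) = y ∧ nbc (n + 1) p ∧ x ≠ p ⟨1, by omega⟩
            then H x (p 0) * pw H (n + 1) p else 0) else 0 := by
    intro z; split <;> simp
  simp_rw [pull]
  rw [Finset.sum_ite_eq' Finset.univ x]
  simp

lemma lemB (n : ℕ) (x y : ι) :
    (H * nbPow H (n + 2)) x y =
      ∑ p : Fin (n + 3) → ι,
        if p (Fin.last (n + 2)) = y ∧ nbc (n + 2) p
        then H x (p 0) * pw H (n + 2) p else 0 := by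
  rw [Matrix.mul_apply]
  simp only [nbPow_apply, Finset.mul_sum]
  rw [Finset.sum_comm]
  refine Finset.sum_congr rfl fun p _ => ?_
  have step : ∀ z : ι,
      (H x z * if p 0 = z ∧ p (Fin.last (n + 2)) = y ∧ nbc (n + 2) p
               then pw H (n + 2) p else 0)
      = if z = p 0 then
          (if p (Fin.last (n + 2)) = y ∧ nbc (n + 2) p
           then H x (p 0) * pw H (n + 2) p else 0) else 0 := by
    intro z
    by_cases hz : z = p 0
    · subst hz
      by_cases h : p (Fin.last (n + 2)) = y ∧ nbc (n + 2) p <;> simp [h]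
    · have h0 : ¬(p 0 = z) := fun h => hz h.symm
      simp [h0, hz]
  simp_rw [step]
  rw [Finset.sum_ite_eq' Finset.univ (p 0)]
  simp

lemma one_mk {n : ℕ} (h : 1 < n + 2) : (⟨1, h⟩ : Fin (n + 2)) = 1 := by
  ext
  simp [Fin.val_one]

lemma hprod_lem (hHerm : H.IsHermitian) {A : ι → ι → Prop} {M : ℕ}
    (hH : ∀ x y, ‖H x y‖ ^ 2 = if A x y then 1 / ((M : ℝ) - 1) else 0) (x z : ι) :
    H x z * H z x = if A x z then ((M : ℂ) - 1)⁻¹ else 0 := by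
  have h1 : H z x = starRingEnd ℂ (H x z) := (hHerm.apply z x).symm
  rw [h1, Complex.mul_conj]
  have h2 := hH x z
  rw [Complex.normSq_eq_norm_sq, h2]
  by_cases hA : A x z
  · rw [if_pos hA, if_pos hA]
    push_cast
    rw [one_div]
  · rw [if_neg hA, if_neg hA]
    norm_num

lemma cardA_lem {A : ι → ι → Prop} {M : ℕ}
    (hcard : ∀ x, Nat.card {y // A x y} = M) (x : ι) :
    (Finset.univ.filter (fun z => A x z)).card = M := by
  rw [← hcard x, Nat.card_eq_fintype_card, Fintype.card_subtype]

lemma hMne {M : ℕ} (hM : 2 ≤ M) : ((M : ℂ) - 1) ≠ 0 := by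
  rw [sub_ne_zero]
  norm_cast
  omega

lemma lemC {A : ι → ι → Prop} {M : ℕ} (hM : 2 ≤ M) (hHerm : H.IsHermitian)
    (hcard : ∀ x, Nat.card {y // A x y} = M)
    (hH : ∀ x y, ‖H x y‖ ^ 2 = if A x y then 1 / ((M : ℝ) - 1) else 0)
    (n : ℕ) (x y : ι) :
    (∑ p : Fin (n + 3) → ι,
        if p (Fin.last (n + 2)) = y ∧ nbc (n + 2) p ∧ x = p ⟨1, by omega⟩
        then H x (p 0) * pw H (n + 2) p else 0)
      = nbPow H (n + 1) x y := by
  rw [sum_cons, Finset.sum_comm, nbPow_apply]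
  refine Finset.sum_congr rfl fun r _ => ?_
  have step : ∀ z : ι,
      (if (Fin.cons z r : Fin (n + 3) → ι) (Fin.last (n + 2)) = y ∧
            nbc (n + 2) (Fin.cons z r) ∧ x = (Fin.cons z r : Fin (n + 3) → ι) ⟨1, by omega⟩
       then H x ((Fin.cons z r : Fin (n + 3) → ι) 0) * pw H (n + 2) (Fin.cons z r) else 0)
      = (if r 0 = x ∧ r (Fin.last (n + 1)) = y ∧ nbc (n + 1) r
         then (if z = r 1 then 0 else H x z * H z x) * pw H (n + 1) r else 0) := by
    intro z
    have e1 : (Fin.cons z r : Fin (n + 3) → ι) ⟨1, by omega⟩ = r 0 := by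
      rw [cons_mk_succ z r 0 (by omega)]
      rfl
    rw [cons_last, cons_pw, Fin.cons_zero, e1, cons_nbc, one_mk]
    by_cases h0 : r 0 = x
    · rw [← h0]
      by_cases h1 : r (Fin.last (n + 1)) = y <;>
        by_cases h2 : nbc (n + 1) r <;>
        by_cases h3 : z = r 1 <;>
        simp [h1, h2, h3] <;> ring
    · have h0' : ¬(x = r 0) := fun h => h0 h.symm
      simp [h0, h0']
  simp_rw [step]
  by_cases hQ : r 0 = x ∧ r (Fin.last (n + 1)) = y ∧ nbc (n + 1) r
  · simp only [hQ, and_self, if_true, if_pos hQ, ← Finset.sum_mul]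
    by_cases hw : pw H (n + 1) r = 0
    · rw [hw, mul_zero]
    · have hfac : H (r 0) (r 1) ≠ 0 := by
        intro hz
        apply hw
        unfold pw
        apply Finset.prod_eq_zero (Finset.mem_univ (0 : Fin (n + 1)))
        simpa using hz
      have hA1 : A x (r 1) := by
        by_contra hA
        have h2 := hH x (r 1)
        rw [if_neg hA] at h2
        have hzero : H x (r 1) = 0 := by
          have := (pow_eq_zero_iff (n := 2) (by norm_num)).mp h2
          simpa using this
        apply hfac
        rw [hQ.1, hzero]
      have hsum1 : (∑ z : ι, if z = r 1 then 0 else H x z * H z x) = 1 := by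
        have ptw : ∀ z : ι, (if z = r 1 then (0 : ℂ) else H x z * H z x)
            = H x z * H z x - (if z = r 1 then H x z * H z x else 0) := by
          intro z
          by_cases h : z = r 1 <;> simp [h]
        simp_rw [ptw]
        rw [Finset.sum_sub_distrib, Finset.sum_ite_eq' Finset.univ (r 1)]
        simp only [Finset.mem_univ, if_true]
        have hall : (∑ z : ι, H x z * H z x) = (M : ℂ) * ((M : ℂ) - 1)⁻¹ := by
          simp_rw [hprod_lem H hHerm hH x]
          rw [← Finset.sum_filter, Finset.sum_const, cardA_lem hcard, nsmul_eq_mul]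
        rw [hall, hprod_lem H hHerm hH, if_pos hA1]
        have e : (M : ℂ) * ((M : ℂ) - 1)⁻¹ - ((M : ℂ) - 1)⁻¹
            = ((M : ℂ) - 1) * ((M : ℂ) - 1)⁻¹ := by ring
        rw [e, mul_inv_cancel₀ (hMne hM)]
      rw [hsum1, one_mul]
  · simp [hQ]

lemma sum_fin1 (g : (Fin 1 → ι) → ℂ) : ∑ p : Fin 1 → ι, g p = ∑ a : ι, g (fun _ => a) := by
  rw [← Equiv.sum_comp (Equiv.funUnique (Fin 1) ι).symm g]
  rfl

lemma nbc_triv {n : ℕ} (hn : n ≤ 1) (p : Fin (n + 1) → ι) : nbc n p := by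
  intro i h
  omega

lemma pw_zero (p : Fin 1 → ι) : pw H 0 p = 1 := by
  simp [pw]

lemma nb_zero : nbPow H 0 = 1 := by
  ext x y
  rw [nbPow_apply, sum_fin1]
  have step : ∀ a : ι,
      (if (fun _ : Fin 1 => a) 0 = x ∧ (fun _ : Fin 1 => a) (Fin.last 0) = y ∧
          nbc 0 (fun _ => a) then pw H 0 (fun _ => a) else 0)
      = if a = x then (if x = y then 1 else 0) else 0 := by
    intro a
    rw [pw_zero]
    have hnbc := nbc_triv (n := 0) (by omega) (fun _ : Fin 1 => a)
    by_cases ha : a = x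
    · subst ha
      by_cases hxy : a = y <;> simp [hxy, nbc_triv (n := 0) (by omega)]
    · simp [ha]
  simp_rw [step]
  rw [Finset.sum_ite_eq' Finset.univ x]
  simp [Matrix.one_apply]

lemma nb_one : nbPow H 1 = H := by
  ext x y
  rw [nbPow_apply, sum_cons, ]
  have step : ∀ z : ι, ∀ p : Fin 1 → ι,
      (if (Fin.cons z p : Fin 2 → ι) 0 = x ∧ (Fin.cons z p : Fin 2 → ι) (Fin.last 1) = y ∧
          nbc 1 (Fin.cons z p) then pw H 1 (Fin.cons z p) else 0)
      = if z = x ∧ p 0 = y then H z (p 0) else 0 := by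
    intro z p
    rw [Fin.cons_zero, cons_last, cons_pw, pw_zero, mul_one]
    simp [nbc_triv (by omega : (1:ℕ) ≤ 1), and_assoc]
  simp_rw [step]
  have step2 : ∀ z : ι, (∑ p : Fin 1 → ι, if z = x ∧ p 0 = y then H z (p 0) else 0)
      = if z = x then H z y else 0 := by
    intro z
    rw [sum_fin1]
    by_cases hz : z = x
    · simp only [hz, true_and]
      have : ∀ a : ι, (if a = y then H x a else 0) = if a = y then H x y else 0 := by
        intro a; by_cases h : a = y <;> simp [h]
      simp_rw [this]
      rw [Finset.sum_ite_eq' Finset.univ y]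
      simp
    · simp [hz]
  simp_rw [step2]
  rw [Finset.sum_ite_eq' Finset.univ x]
  simp

lemma hall_lem (hHerm : H.IsHermitian) {A : ι → ι → Prop} {M : ℕ}
    (hcard : ∀ x, Nat.card {y // A x y} = M)
    (hH : ∀ x y, ‖H x y‖ ^ 2 = if A x y then 1 / ((M : ℝ) - 1) else 0) (x : ι) :
    (∑ z : ι, H x z * H z x) = (M : ℂ) * ((M : ℂ) - 1)⁻¹ := by
  simp_rw [hprod_lem H hHerm hH x]
  rw [← Finset.sum_filter, Finset.sum_const, cardA_lem hcard, nsmul_eq_mul]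

lemma nb_two_apply (x y : ι) :
    nbPow H 2 x y = if x = y then 0 else ∑ z : ι, H x z * H z y := by
  rw [show (2:ℕ) = 0 + 2 from rfl, lemA H 0 x y, sum_cons]
  have step : ∀ z : ι, ∀ q : Fin 1 → ι,
      (if (Fin.cons z q : Fin 2 → ι) (Fin.last 1) = y ∧ nbc 1 (Fin.cons z q) ∧
            x ≠ (Fin.cons z q : Fin 2 → ι) ⟨1, by omega⟩
       then H x ((Fin.cons z q : Fin 2 → ι) 0) * pw H 1 (Fin.cons z q) else 0)
      = if q 0 = y then (if x = y then 0 else H x z * H z y) else 0 := by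
    intro z q
    have e1 : (Fin.cons z q : Fin 2 → ι) ⟨1, by omega⟩ = q 0 := by
      rw [cons_mk_succ z q 0 (by omega)]; rfl
    rw [Fin.cons_zero, cons_last, cons_pw, pw_zero, mul_one, e1]
    have hnbc := nbc_triv (n := 1) (by omega) (Fin.cons z q : Fin 2 → ι)
    by_cases h0 : q 0 = y <;> by_cases hxy : x = y <;>
      simp [h0, hxy, hnbc, Fin.last_zero]
  simp_rw [step]
  have step2 : ∀ z : ι, (∑ q : Fin 1 → ι,
      if q 0 = y then (if x = y then 0 else H x z * H z y) else 0)
      = if x = y then 0 else H x z * H z y := by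
    intro z
    rw [sum_fin1]
    rw [Finset.sum_ite_eq' Finset.univ y]
    simp
  simp_rw [step2]
  split <;> simp

lemma rec_one (hHerm : H.IsHermitian) {A : ι → ι → Prop} {M : ℕ} (hM : 2 ≤ M)
    (hcard : ∀ x, Nat.card {y // A x y} = M)
    (hH : ∀ x y, ‖H x y‖ ^ 2 = if A x y then 1 / ((M : ℝ) - 1) else 0) :
    H * nbPow H 1 = nbPow H 2 + (1 + ((M : ℂ) - 1)⁻¹) • (1 : Matrix ι ι ℂ) := by
  ext x y
  rw [nb_one, Matrix.mul_apply, Matrix.add_apply, Matrix.smul_apply, Matrix.one_apply,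
    nb_two_apply]
  by_cases hxy : x = y
  · subst hxy
    rw [if_pos rfl, if_pos rfl, hall_lem H hHerm hcard hH x]
    simp only [smul_eq_mul, mul_one, zero_add]
    linear_combination mul_inv_cancel₀ (hMne hM)
  · simp [hxy]

lemma lemA' (n : ℕ) (x y : ι) :
    nbPow H (n + 3) x y =
      ∑ p : Fin (n + 3) → ι,
        if p (Fin.last (n + 2)) = y ∧ nbc (n + 2) p ∧ x ≠ p ⟨1, by omega⟩
        then H x (p 0) * pw H (n + 2) p else 0 := lemA H (n + 1) x y

lemma recn (hHerm : H.IsHermitian) {A : ι → ι → Prop} {M : ℕ} (hM : 2 ≤ M)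
    (hcard : ∀ x, Nat.card {y // A x y} = M)
    (hH : ∀ x y, ‖H x y‖ ^ 2 = if A x y then 1 / ((M : ℝ) - 1) else 0) (n : ℕ) :
    H * nbPow H (n + 2) = nbPow H (n + 3) + nbPow H (n + 1) := by
  ext x y
  rw [Matrix.add_apply, lemB, ← lemC H hM hHerm hcard hH n x y,
    lemA' H n x y, ← Finset.sum_add_distrib]
  refine Finset.sum_congr rfl fun p _ => ?_
  by_cases h1 : p (Fin.last (n + 2)) = y
  · by_cases h2 : nbc (n + 2) p
    · by_cases h3 : x = p ⟨1, by omega⟩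
      · rw [if_pos ⟨h1, h2⟩, if_neg (fun hc => hc.2.2 h3), if_pos ⟨h1, h2, h3⟩, zero_add]
      · rw [if_pos ⟨h1, h2⟩, if_pos ⟨h1, h2, h3⟩, if_neg (fun hc => h3 hc.2.2), add_zero]
    · rw [if_neg (fun hc => h2 hc.2), if_neg (fun hc => h2 hc.2.1),
        if_neg (fun hc => h2 hc.2.1), zero_add]
  · rw [if_neg (fun hc => h1 hc.1), if_neg (fun hc => h1 hc.1),
      if_neg (fun hc => h1 hc.1), zero_add]

/-- partial sums -/
noncomputable def Ssum (c : ℂ) (n : ℕ) : Matrix ι ι ℂ :=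
  ∑ k ∈ Finset.range (n / 2 + 1), c ^ k • nbPow H (n - 2 * k)

lemma Ssum_zero (c : ℂ) : Ssum H c 0 = 1 := by
  simp [Ssum, nb_zero]

lemma Ssum_one (c : ℂ) : Ssum H c 1 = H := by
  simp [Ssum, nb_one]

lemma Srec (c : ℂ) (n : ℕ) : Ssum H c (n + 2) = nbPow H (n + 2) + c • Ssum H c n := by
  unfold Ssum
  rw [show (n + 2) / 2 + 1 = (n / 2 + 1) + 1 by omega, Finset.sum_range_succ', add_comm]
  congr 1
  · simp
  · rw [Finset.smul_sum]
    refine Finset.sum_congr rfl fun k _ => ?_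
    rw [show n + 2 - 2 * (k + 1) = n - 2 * k by omega, smul_smul, ← pow_succ']

lemma keyrec (hHerm : H.IsHermitian) {A : ι → ι → Prop} {M : ℕ} (hM : 2 ≤ M)
    (hcard : ∀ x, Nat.card {y // A x y} = M)
    (hH : ∀ x y, ‖H x y‖ ^ 2 = if A x y then 1 / ((M : ℝ) - 1) else 0) :
    ∀ n : ℕ, H * Ssum H ((M : ℂ) - 1)⁻¹ (n + 1)
      = Ssum H ((M : ℂ) - 1)⁻¹ (n + 2) + Ssum H ((M : ℂ) - 1)⁻¹ n := by
  set c := ((M : ℂ) - 1)⁻¹ with hc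
  intro n
  induction n using Nat.twoStepInduction with
  | zero =>
    show H * Ssum H c 1 = Ssum H c 2 + Ssum H c 0
    have h1 := rec_one H hHerm hM hcard hH
    rw [nb_one] at h1
    rw [Ssum_one, Ssum_zero, h1, show Ssum H c 2 = Ssum H c (0 + 2) from rfl,
      Srec H c 0, Ssum_zero, add_smul, one_smul,
      show nbPow H (0 + 2) = nbPow H 2 from rfl]
    abel
  | one =>
    show H * Ssum H c 2 = Ssum H c 3 + Ssum H c 1
    have h2 := recn H hHerm hM hcard hH 0
    rw [show (0:ℕ) + 2 = 2 from rfl, show (0:ℕ) + 3 = 3 from rfl,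
      show (0:ℕ) + 1 = 1 from rfl] at h2
    rw [show Ssum H c 2 = Ssum H c (0 + 2) from rfl, Srec H c 0, Ssum_zero,
      mul_add, Matrix.mul_smul, mul_one,
      show nbPow H (0 + 2) = nbPow H 2 from rfl, h2,
      show Ssum H c 3 = Ssum H c (1 + 2) from rfl, Srec H c 1, Ssum_one,
      show nbPow H (1 + 2) = nbPow H 3 from rfl, nb_one H]
    abel
  | more n ihn ih1 =>
    show H * Ssum H c ((n + 1) + 2) = Ssum H c ((n + 2) + 2) + Ssum H c (n + 2)
    rw [Srec H c (n + 1), mul_add, Matrix.mul_smul, ihn,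
      recn H hHerm hM hcard hH (n + 1),
      show nbPow H (n + 1 + 3) = nbPow H (n + 2 + 2) from rfl,
      show nbPow H (n + 1 + 1) = nbPow H (n + 2) from rfl,
      Srec H c (n + 2), Srec H c n]
    module

lemma C2_cancel : (2 : Polynomial ℂ) * (Polynomial.C 2⁻¹ * Polynomial.X) = Polynomial.X := by
  have : (2 : Polynomial ℂ) = Polynomial.C 2 := (map_ofNat Polynomial.C 2).symm
  rw [this, ← mul_assoc, ← Polynomial.C_mul]
  norm_num
end More

lemma tildeU_zero : tildeU 0 = 1 := by
  unfold tildeU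
  rw [Nat.cast_zero, Polynomial.Chebyshev.U_zero, Polynomial.one_comp]

lemma tildeU_one : tildeU 1 = Polynomial.X := by
  unfold tildeU
  rw [Nat.cast_one, Polynomial.Chebyshev.U_one, Polynomial.mul_comp, Polynomial.X_comp]
  have : ((2 : Polynomial ℂ)).comp (Polynomial.C 2⁻¹ * Polynomial.X) = 2 := by
    simp
  rw [this, C2_cancel]

lemma tildeU_rec (n : ℕ) :
    tildeU (n + 2) = Polynomial.X * tildeU (n + 1) - tildeU n := by
  unfold tildeU
  rw [show ((n + 2 : ℕ) : ℤ) = (n : ℤ) + 2 by push_cast; ring,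
    Polynomial.Chebyshev.U_add_two,
    show ((n + 1 : ℕ) : ℤ) = (n : ℤ) + 1 by push_cast; ring]
  rw [Polynomial.sub_comp, Polynomial.mul_comp, Polynomial.mul_comp, Polynomial.X_comp]
  have : ((2 : Polynomial ℂ)).comp (Polynomial.C 2⁻¹ * Polynomial.X) = 2 := by
    simp
  rw [this]
  rw [show (2 : Polynomial ℂ) * (Polynomial.C 2⁻¹ * Polynomial.X)
        * (Polynomial.Chebyshev.U ℂ ((n:ℤ)+1)).comp (Polynomial.C 2⁻¹ * Polynomial.X)
      = ((2 : Polynomial ℂ) * (Polynomial.C 2⁻¹ * Polynomial.X))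
        * (Polynomial.Chebyshev.U ℂ ((n:ℤ)+1)).comp (Polynomial.C 2⁻¹ * Polynomial.X) by ring,
    C2_cancel]

section Main
open Classical
set_option linter.unusedSectionVars false
variable {ι : Type*} [Fintype ι] [DecidableEq ι] (H : Matrix ι ι ℂ)

lemma main' (hHerm : H.IsHermitian) {A : ι → ι → Prop} {M : ℕ} (hM : 2 ≤ M)
    (hcard : ∀ x, Nat.card {y // A x y} = M)
    (hH : ∀ x y, ‖H x y‖ ^ 2 = if A x y then 1 / ((M : ℝ) - 1) else 0) :
    ∀ n : ℕ, Polynomial.aeval H (tildeU n) = Ssum H ((M : ℂ) - 1)⁻¹ n := by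
  intro n
  induction n using Nat.twoStepInduction with
  | zero => rw [tildeU_zero, map_one, Ssum_zero]
  | one => rw [tildeU_one, Polynomial.aeval_X, Ssum_one]
  | more n ihn ih1 =>
    rw [tildeU_rec, map_sub, map_mul, Polynomial.aeval_X, ihn, ih1,
      keyrec H hHerm hM hcard hH n, add_sub_cancel_right]
end Main

open Classical in
/-- `Ũ_n(H) = Σ_{k≥0} (M−1)^{-k} H^{(n−2k)}` (only the terms with `2k ≤ n` contribute,
by the convention `H^{(m)} = 0` for `m < 0`). -/
theorem tildeU_eq_sum_nbPow {ι : Type*} [Fintype ι] [DecidableEq ι]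
    (H : Matrix ι ι ℂ) (A : ι → ι → Prop) (M : ℕ) (hM : 2 ≤ M)
    (hHerm : H.IsHermitian)
    (hAsymm : ∀ x y, A x y ↔ A y x)
    (hAirr : ∀ x, ¬ A x x)
    (hcard : ∀ x, Nat.card {y // A x y} = M)
    (hH : ∀ x y, ‖H x y‖ ^ 2 = if A x y then 1 / ((M : ℝ) - 1) else 0) :
    ∀ n : ℕ, Polynomial.aeval H (tildeU n) =
      ∑ k ∈ Finset.range (n / 2 + 1), (((M : ℂ) - 1)⁻¹) ^ k • nbPow H (n - 2 * k) := by
  intro n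
  rw [main' H hHerm hM hcard hH n]
  rfl
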